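/- Let C be an arboreal category and f : X ↠ Y a quotient. Then the tree morphism Path(f) : Path(X) → Path(Y) is surjective. -/

import Mathlib

open CategoryTheory CategoryTheory.Limits

universe v u

variable {C : Type u} [Category.{v} C]

/-- A weak factorisation system `(Q, M)` on a category `C`. -/
structure WFS (C : Type u) [Category.{v} C] where
  Q : MorphismProperty C
  M : MorphismProperty C
  fact : ∀ {X Y : C} (f : X ⟶ Y), ∃ (Z : C) (e : X ⟶ Z) (m : Z ⟶ Y), Q e ∧ M m ∧ e ≫ m = f
  Q_iff : ∀ {X Y : C} (f : X ⟶ Y), Q f ↔ ∀ ⦃A B : C⦄ (g : A ⟶ B), M g → HasLiftingProperty f g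
  M_iff : ∀ {X Y : C} (g : X ⟶ Y), M g ↔ ∀ ⦃A B : C⦄ (f : A ⟶ B), Q f → HasLiftingProperty f g

/-- A proper factorisation system: a weak factorisation system in which every `Q`-morphism is an
epimorphism and every `M`-morphism is a monomorphism. -/
structure ProperWFS (C : Type u) [Category.{v} C] extends WFS C where
  q_epi : ∀ {X Y : C} (f : X ⟶ Y), Q f → Epi f
  m_mono : ∀ {X Y : C} (f : X ⟶ Y), M f → Mono f


/-- A stable proper factorisation system: additionally, the pullback of a quotient (`Q`-morphism)
along an embedding (`M`-morphism) exists and is again a quotient. -/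
structure StableWFS (C : Type u) [Category.{v} C] extends ProperWFS C where
  stable : ∀ {X Z W : C} (e : X ⟶ W) (m : Z ⟶ W), Q e → M m →
    ∃ (P : C) (p₁ : P ⟶ X) (p₂ : P ⟶ Z), IsPullback p₁ p₂ e m ∧ Q p₂

/-- The type of `M`-subobjects (representatives): embeddings into `X`. -/
abbrev MSub (M : MorphismProperty C) (X : C) : Type (max u v) :=
  Σ S : C, {m : S ⟶ X // M m}

/-- `M`-subobjects are preordered by factorisation; the poset of `M`-subobjects is the
induced partial order on the antisymmetrization. -/
instance (M : MorphismProperty C) (X : C) : Preorder (MSub M X) where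
  le a b := ∃ i : a.1 ⟶ b.1, i ≫ b.2.1 = a.2.1
  le_refl a := ⟨𝟙 a.1, Category.id_comp _⟩
  le_trans a b c h₁ h₂ := by
    obtain ⟨i, hi⟩ := h₁
    obtain ⟨j, hj⟩ := h₂
    exact ⟨i ≫ j, by rw [Category.assoc, hj, hi]⟩

/-- An object `X` is a path if its poset of `M`-subobjects is a finite chain, i.e. the preorder
of `M`-subobjects is total and has finitely many equivalence classes. -/
def IsPathOb (M : MorphismProperty C) (X : C) : Prop :=
  (∀ a b : MSub M X, a ≤ b ∨ b ≤ a) ∧ Finite (Antisymmetrization (MSub M X) (· ≤ ·))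

/-- A path category: a category with a stable proper factorisation system having all small
coproducts of paths, in which every path is connected, and satisfying the 2-out-of-3 condition
for quotients between paths. -/
structure PathCategory (C : Type u) [Category.{v} C] extends StableWFS C where
  pathCoproducts : ∀ {ι : Type v} (Ps : ι → C), (∀ i, IsPathOb M (Ps i)) →
    HasColimit (Discrete.functor Ps)
  connected : ∀ {ι : Type v} [Nonempty ι] (Ps : ι → C), (∀ i, IsPathOb M (Ps i)) →
    ∀ (c : ColimitCocone (Discrete.functor Ps)) {P : C}, IsPathOb M P →
      ∀ f : P ⟶ c.cocone.pt, ∃ (i : ι) (g : P ⟶ Ps i), g ≫ c.cocone.ι.app ⟨i⟩ = f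
  two_of_three : ∀ {P R S : C}, IsPathOb M P → IsPathOb M R → IsPathOb M S →
    ∀ (f : P ⟶ R) (g : R ⟶ S), Q (f ≫ g) → Q f

/-- The indexing category of path embeddings into `X`: the full subcategory of `Over X`
on embeddings with path domain. -/
abbrev PathOver (M : MorphismProperty C) (X : C) :=
  ObjectProperty.FullSubcategory (fun f : Over X => M f.hom ∧ IsPathOb M f.left)

/-- The canonical diagram of path embeddings into `X`. -/
def pathDiagram (M : MorphismProperty C) (X : C) : PathOver M X ⥤ C :=
  ObjectProperty.ι _ ⋙ Over.forget X

/-- The canonical cocone with vertex `X` over the diagram of path embeddings into `X`. -/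
def pathCocone (M : MorphismProperty C) (X : C) : Cocone (pathDiagram M X) where
  pt := X
  ι :=
    { app := fun f => f.obj.hom
      naturality := fun f g k => by
        simp [pathDiagram] }

/-- An arboreal category: a path category in which every object is path-generated, i.e. the
canonical cocone of path embeddings into `X` is a colimit cocone, for every `X`. -/
structure ArborealCategory (C : Type u) [Category.{v} C] extends PathCategory C where
  pathGenerated : ∀ X : C, Nonempty (IsColimit (pathCocone M X))


/-- Auxiliary: identities are `M`-maps. -/
lemma WFS.M_id' (w : WFS C) (X : C) : w.M (𝟙 X) := by
  rw [w.M_iff]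
  intro A B f _
  infer_instance

/-- Auxiliary: `M` is closed under composition. -/
lemma WFS.M_comp' (w : WFS C) {A B D : C} {g : A ⟶ B} {h : B ⟶ D}
    (hg : w.M g) (hh : w.M h) : w.M (g ≫ h) := by
  rw [w.M_iff]
  intro A' B' f hf
  haveI := (w.M_iff g).mp hg f hf
  haveI := (w.M_iff h).mp hh f hf
  infer_instance

/-- In an arboreal category, if `f : X ↠ Y` is a quotient then `Path(f) : Path(X) → Path(Y)` is
surjective: every path embedding `n` into `Y` is the image (the `M`-part of the
(quotient, embedding) factorisation of `f ∘ m`) of some path embedding `m` into `X`. -/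
theorem stmt18 (ac : ArborealCategory C) {X Y : C} (f : X ⟶ Y) (hf : ac.Q f)
    {Qn : C} (n : Qn ⟶ Y) (hn : ac.M n) (hQn : IsPathOb ac.M Qn) :
    ∃ (P : C) (m : P ⟶ X) (e : P ⟶ Qn),
      ac.M m ∧ IsPathOb ac.M P ∧ ac.Q e ∧ e ≫ n = m ≫ f := by
  classical
  obtain ⟨Z, p₁, p₂, hpb, hq⟩ := ac.stable f n hf hn
  -- `p₁` is an `M`-map (M is stable under pullback)
  have hMp₁ : ac.M p₁ := by
    rw [ac.M_iff]
    intro A B g hg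
    constructor
    intro top bot sq
    haveI : HasLiftingProperty g n := (ac.M_iff n).mp hn g hg
    have sq2 : CommSq (top ≫ p₂) g n (bot ≫ f) := ⟨by
      rw [Category.assoc, ← hpb.w, ← Category.assoc, sq.w, Category.assoc]⟩
    refine ⟨⟨⟨hpb.lift bot sq2.lift sq2.fac_right.symm, ?_, ?_⟩⟩⟩
    · apply hpb.hom_ext
      · rw [Category.assoc, hpb.lift_fst, sq.w]
      · rw [Category.assoc, hpb.lift_snd, sq2.fac_left]
    · exact hpb.lift_fst _ _ _
  obtain ⟨hcolim⟩ := ac.pathGenerated Z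
  -- the diagram of path embeddings into `Z` is nonempty
  have hne : Nonempty (PathOver ac.M Z) := by
    by_contra hcon
    rw [not_nonempty_iff] at hcon
    have huniq : ∀ {W : C} (u v : Z ⟶ W), u = v := fun u v =>
      hcolim.hom_ext (fun j => hcon.elim j)
    have hmap : ∀ W : C, Z ⟶ W := fun W =>
      hcolim.desc ⟨W, { app := fun j => hcon.elim j, naturality := fun j => hcon.elim j }⟩
    have hle : ∀ a b : MSub ac.M Z, a ≤ b := by
      intro a b
      refine ⟨a.2.1 ≫ hmap b.1, ?_⟩
      rw [Category.assoc, huniq (hmap b.1 ≫ b.2.1) (𝟙 Z), Category.comp_id]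
    have hpath : IsPathOb ac.M Z := by
      constructor
      · intro a b; exact Or.inl (hle a b)
      · haveI : Subsingleton (Antisymmetrization (MSub ac.M Z) (· ≤ ·)) := by
          constructor
          intro a b
          induction a using Antisymmetrization.ind
          induction b using Antisymmetrization.ind
          exact Quotient.sound ⟨hle _ _, hle _ _⟩
        infer_instance
    exact hcon.elim ⟨Over.mk (𝟙 Z), by simpa using ⟨ac.toWFS.M_id' Z, hpath⟩⟩
  -- factor each path embedding composed with `p₂`
  have fact0 := fun (i : PathOver ac.M Z) => ac.fact (i.obj.hom ≫ p₂)
  choose S e m hQe hMm hcomm using fact0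
  let img : PathOver ac.M Z → MSub ac.M Qn := fun i => ⟨S i, m i, hMm i⟩
  haveI := hQn.2
  -- choose a maximal image
  have htot : ∀ x y : Antisymmetrization (MSub ac.M Qn) (· ≤ ·), x ≤ y ∨ y ≤ x := by
    intro x y
    induction x using Antisymmetrization.ind
    induction y using Antisymmetrization.ind
    rcases hQn.1 _ _ with h | h
    · exact Or.inl (toAntisymmetrization_le_toAntisymmetrization_iff.mpr h)
    · exact Or.inr (toAntisymmetrization_le_toAntisymmetrization_iff.mpr h)
  obtain ⟨i₀⟩ := hne
  set g : PathOver ac.M Z → Antisymmetrization (MSub ac.M Qn) (· ≤ ·) :=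
    fun i => toAntisymmetrization (· ≤ ·) (img i) with hg
  have hs : (Set.range g).Finite := Set.toFinite _
  obtain ⟨x, hxs, hxmax⟩ := (show ∃ a ∈ Set.range g, ∀ a' ∈ Set.range g, id a ≤ id a' → id a = id a' by
    obtain ⟨a, ha, hamax⟩ := hs.exists_maximal ⟨g i₀, ⟨i₀, rfl⟩⟩
    exact ⟨a, ha, fun a' ha' h => le_antisymm h (hamax ha' h)⟩)
  obtain ⟨imax, himax⟩ := hxs
  have hall : ∀ i, img i ≤ img imax := by
    intro i
    rcases htot (g i) x with h | h
    · rw [← himax] at h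
      exact toAntisymmetrization_le_toAntisymmetrization_iff.mp h
    · have hx : id x = id (g i) := hxmax (g i) ⟨i, rfl⟩ h
      simp only [id] at hx
      rw [← himax] at hx
      exact toAntisymmetrization_le_toAntisymmetrization_iff.mp (le_of_eq hx.symm)
  choose j hj using hall
  haveI hmono : Mono (m imax) := ac.m_mono _ (hMm imax)
  -- a cocone on the path diagram with vertex `S imax`
  let c : Cocone (pathDiagram ac.M Z) :=
    { pt := S imax
      ι :=
        { app := fun i => e i ≫ j i
          naturality := fun i i' k => by
            rw [← cancel_mono (m imax)]
            have hw : (pathDiagram ac.M Z).map k ≫ i'.obj.hom = i.obj.hom := by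
              simp [pathDiagram]
            simp only [Functor.const_obj_obj, Functor.const_obj_map, Category.comp_id,
              Category.assoc]
            have h1 : ∀ i, (e i ≫ j i) ≫ m imax = i.obj.hom ≫ p₂ := fun i =>
              (Category.assoc _ _ _).trans ((congrArg (e i ≫ ·) (hj i)).trans (hcomm i))
            exact (congrArg _ (h1 i')).trans ((Category.assoc _ _ _).symm.trans
              ((congrArg (· ≫ p₂) hw).trans (h1 i).symm)) } }
  have ht : ∀ i : PathOver ac.M Z, i.obj.hom ≫ hcolim.desc c = e i ≫ j i := fun i =>
    hcolim.fac c i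
  have htq : hcolim.desc c ≫ m imax = p₂ := by
    apply hcolim.hom_ext
    intro i
    have : (pathCocone ac.M Z).ι.app i = i.obj.hom := rfl
    erw [this, ← Category.assoc, ht i, Category.assoc, hj i, hcomm i]
    rfl
  haveI : HasLiftingProperty p₂ (m imax) := (ac.Q_iff p₂).mp hq _ (hMm imax)
  have sq : CommSq (hcolim.desc c) p₂ (m imax) (𝟙 Qn) := ⟨by erw [htq, Category.comp_id]⟩
  haveI : sq.HasLift := ((ac.Q_iff p₂).mp hq _ (hMm imax)).sq_hasLift sq
  haveI : IsSplitEpi (m imax) := ⟨⟨⟨sq.lift, sq.fac_right⟩⟩⟩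
  haveI : IsIso (m imax) := isIso_of_mono_of_isSplitEpi _
  refine ⟨imax.obj.left, imax.obj.hom ≫ p₁, e imax ≫ m imax,
    ac.toWFS.M_comp' imax.property.1 hMp₁, imax.property.2, ?_, ?_⟩
  · rw [ac.Q_iff]
    intro A B u hu
    haveI := (ac.Q_iff (e imax)).mp (hQe imax) u hu
    infer_instance
  · rw [hcomm imax, Category.assoc, ← hpb.w, Category.assoc]
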